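/- Let σ² > 0 and 0 < C_k ≤ C_{k+1} be real numbers, and define F_k : ℝ → ℝ by F_k(x) = log₂(C_{k+1}·x + σ²) − log₂(C_k·x + σ²). Then F_k is concave on [0, ∞). -/

import Mathlib

/-- Concavity of `F_k(x) = log₂(C_{k+1} x + σ²) − log₂(C_k x + σ²)` on `[0, ∞)`
when `0 < C_k ≤ C_{k+1}` (key ingredient of Theorem 3 of the paper). -/
theorem stmt_4 (σ2 : ℝ) (hσ : 0 < σ2) (Ck Ck1 : ℝ) (hCk : 0 < Ck) (hle : Ck ≤ Ck1)
    (F : ℝ → ℝ)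
    (hF : ∀ x : ℝ, F x = Real.logb 2 (Ck1 * x + σ2) - Real.logb 2 (Ck * x + σ2)) :
    ConcaveOn ℝ (Set.Ici (0 : ℝ)) F := by
  have hCk1 : 0 < Ck1 := lt_of_lt_of_le hCk hle
  have hlog2 : (0:ℝ) < Real.log 2 := Real.log_pos (by norm_num)
  have hFeq : F = fun x => (Real.log (Ck1 * x + σ2) - Real.log (Ck * x + σ2)) / Real.log 2 := by
    funext x
    rw [hF x]
    simp [Real.logb, sub_div]
  subst hFeq
  have hpos : ∀ (c : ℝ), 0 < c → ∀ x : ℝ, 0 ≤ x → 0 < c * x + σ2 := by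
    intro c hc x hx; nlinarith
  refine concaveOn_of_hasDerivWithinAt2_nonpos (convex_Ici 0)
    (f' := fun x => (Ck1 / (Ck1 * x + σ2) - Ck / (Ck * x + σ2)) / Real.log 2)
    (f'' := fun x => (Ck * Ck / (Ck * x + σ2) ^ 2 - Ck1 * Ck1 / (Ck1 * x + σ2) ^ 2) / Real.log 2)
    ?_ ?_ ?_ ?_
  · -- continuity
    apply ContinuousOn.div_const
    apply ContinuousOn.sub <;>
    · apply Real.continuousOn_log.comp (by fun_prop)
      intro x hx
      simp only [Set.mem_compl_iff, Set.mem_singleton_iff]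
      exact ne_of_gt (by first | exact hpos Ck1 hCk1 x hx | exact hpos Ck hCk x hx)
  · -- first derivative
    intro x hx
    rw [interior_Ici] at hx
    have hx0 : (0:ℝ) ≤ x := le_of_lt hx
    have hu : (Ck1 * x + σ2) ≠ 0 := ne_of_gt (hpos Ck1 hCk1 x hx0)
    have hv : (Ck * x + σ2) ≠ 0 := ne_of_gt (hpos Ck hCk x hx0)
    have h1 : HasDerivAt (fun x => Real.log (Ck1 * x + σ2)) (Ck1 / (Ck1 * x + σ2)) x := by
      have := (((hasDerivAt_id x).const_mul Ck1).add_const σ2).log hu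
      simpa using this
    have h2 : HasDerivAt (fun x => Real.log (Ck * x + σ2)) (Ck / (Ck * x + σ2)) x := by
      have := (((hasDerivAt_id x).const_mul Ck).add_const σ2).log hv
      simpa using this
    exact ((h1.sub h2).div_const (Real.log 2)).hasDerivWithinAt
  · -- second derivative
    intro x hx
    rw [interior_Ici] at hx
    have hx0 : (0:ℝ) ≤ x := le_of_lt hx
    have hu : (0:ℝ) < Ck1 * x + σ2 := hpos Ck1 hCk1 x hx0
    have hv : (0:ℝ) < Ck * x + σ2 := hpos Ck hCk x hx0
    have hu1 : HasDerivAt (fun x => Ck1 * x + σ2) Ck1 x := by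
      simpa using ((hasDerivAt_id x).const_mul Ck1).add_const σ2
    have hv1 : HasDerivAt (fun x => Ck * x + σ2) Ck x := by
      simpa using ((hasDerivAt_id x).const_mul Ck).add_const σ2
    have h1 : HasDerivAt (fun x => Ck1 / (Ck1 * x + σ2))
        ((0 * (Ck1 * x + σ2) - Ck1 * Ck1) / (Ck1 * x + σ2) ^ 2) x :=
      (hasDerivAt_const x Ck1).div hu1 (ne_of_gt hu)
    have h2 : HasDerivAt (fun x => Ck / (Ck * x + σ2))
        ((0 * (Ck * x + σ2) - Ck * Ck) / (Ck * x + σ2) ^ 2) x :=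
      (hasDerivAt_const x Ck).div hv1 (ne_of_gt hv)
    have h3 := ((h1.sub h2).div_const (Real.log 2)).hasDerivWithinAt
      (s := interior (Set.Ici (0:ℝ)))
    convert h3 using 1
    · rfl
    · rfl
    · rfl
    ring
  · -- nonpositivity
    intro x hx
    rw [interior_Ici] at hx
    have hx0 : (0:ℝ) ≤ x := le_of_lt hx
    have hu : (0:ℝ) < Ck1 * x + σ2 := hpos Ck1 hCk1 x hx0
    have hv : (0:ℝ) < Ck * x + σ2 := hpos Ck hCk x hx0
    apply div_nonpos_of_nonpos_of_nonneg _ (le_of_lt hlog2)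
    rw [sub_nonpos, div_le_div_iff₀ (by positivity) (by positivity)]
    have key : Ck * (Ck1 * x + σ2) ≤ Ck1 * (Ck * x + σ2) := by nlinarith
    nlinarith [mul_le_mul key key (by positivity) (by positivity)]
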